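/- For every n ≥ 1 and every n-formula φ of L_□, the following are equivalent: (i) φ is valid in every model (W,V) whose variable assignment satisfies the Con, Ground, and Min constraints; (ii) S5[Con,Ground,Min_n] ⊢ φ. -/

import Mathlib

namespace KripkeModal

/-- Formulas of the modal language `L_□`: atoms `T(x)`, `F(x)` for variables
`x : ℕ`, negation, conjunction, and box. -/
inductive Fml : Type
  | tt : ℕ → Fml   -- T(x)
  | ff : ℕ → Fml   -- F(x)
  | neg : Fml → Fml
  | and : Fml → Fml → Fml
  | box : Fml → Fml
deriving DecidableEq

namespace Fml

/-- Material implication, defined from `¬, ∧`. -/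
def imp (φ ψ : Fml) : Fml := neg (and φ (neg ψ))

/-- Disjunction, defined from `¬, ∧`. -/
def or (φ ψ : Fml) : Fml := neg (and (neg φ) (neg ψ))

/-- Biconditional. -/
def iff (φ ψ : Fml) : Fml := and (imp φ ψ) (imp ψ φ)

/-- Diamond: `◇φ := ¬□¬φ`. -/
def dia (φ : Fml) : Fml := neg (box (neg φ))

/-- `N(x) := ¬T(x) ∧ ¬F(x)`. -/
def Nf (x : ℕ) : Fml := and (neg (tt x)) (neg (ff x))

/-- A fixed contradiction. -/
def bot : Fml := and (tt 0) (neg (tt 0))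

end Fml

open Fml

/-- Evaluate a formula propositionally under a valuation `v` of the "atoms":
the atomic formulas `T(x)`, `F(x)` and all boxed formulas are treated as
propositional atoms. -/
def evalProp (v : Fml → Bool) : Fml → Bool
  | Fml.neg φ => !(evalProp v φ)
  | Fml.and φ ψ => evalProp v φ && evalProp v ψ
  | φ => v φ

/-- A formula is a substitution instance of a classical propositional tautology
iff it evaluates to true under every propositional valuation of its atoms. -/
def Tautology (φ : Fml) : Prop := ∀ v : Fml → Bool, evalProp v φ = true

/-- Provability in the modal system `S5[Ax]`: the smallest set of formulas
containing all substitution instances of propositional tautologies, all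
instances of K, T and 5, all formulas in `Ax`, closed under modus ponens and
necessitation.  Taking `Ax = ∅` gives `S5` itself. -/
inductive Prv (Ax : Set Fml) : Fml → Prop
  | taut {φ} : Tautology φ → Prv Ax φ
  | axK (A B : Fml) : Prv Ax (imp (box (imp A B)) (imp (box A) (box B)))
  | axT (A : Fml) : Prv Ax (imp (box A) A)
  | ax5 (A : Fml) : Prv Ax (imp (dia A) (box (dia A)))
  | axm {φ} : φ ∈ Ax → Prv Ax φ
  | mp {A B} : Prv Ax (imp A B) → Prv Ax A → Prv Ax B
  | nec {A} : Prv Ax A → Prv Ax (box A)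

/-- A system is consistent if it does not prove a contradiction. -/
def Consistent (Ax : Set Fml) : Prop := ¬ Prv Ax Fml.bot

/-- The axiom schema `Con`: `¬(T(x) ∧ F(x))`. -/
def ConAx : Set Fml := { φ | ∃ x : ℕ, φ = neg (and (tt x) (ff x)) }

/-- The axiom schema `Ground`: `(◇T(x) ∧ ◇F(x)) → ◇N(x)`. -/
def GroundAx : Set Fml :=
  { φ | ∃ x : ℕ, φ = imp (and (dia (tt x)) (dia (ff x))) (dia (Nf x)) }

/-- Conjunction of a list of formulas (empty conjunction is `¬⊥`). -/
def bigAnd : List Fml → Fml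
  | [] => Fml.neg Fml.bot
  | [φ] => φ
  | φ :: ψ :: rest => Fml.and φ (bigAnd (ψ :: rest))

/-- Disjunction of a list of formulas (the empty disjunction is the fixed
contradiction `⊥`). -/
def bigOr : List Fml → Fml
  | [] => Fml.bot
  | [φ] => φ
  | φ :: ψ :: rest => Fml.or φ (bigOr (ψ :: rest))

/-- The axiom schema `Min_n`: all instances
`(◇N(x_1) ∧ … ∧ ◇N(x_n)) → ◇(N(x_1) ∧ … ∧ N(x_n))` obtained by substituting
arbitrary (not necessarily distinct) variables for `x_1, …, x_n`. -/
def MinAx (n : ℕ) : Set Fml :=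
  { φ | ∃ l : List ℕ, l.length = n ∧
      φ = imp (bigAnd (l.map (fun x => dia (Nf x)))) (dia (bigAnd (l.map Nf))) }

/-- A formula is extensional if it contains no `□`. -/
def Extensional : Fml → Prop
  | tt _ => True
  | ff _ => True
  | Fml.neg φ => Extensional φ
  | Fml.and φ ψ => Extensional φ ∧ Extensional ψ
  | box _ => False

/-- A formula is intensional if every atomic subformula occurs within the
scope of a `□`. -/
def Intensional : Fml → Prop
  | tt _ => False
  | ff _ => False
  | Fml.neg φ => Intensional φ
  | Fml.and φ ψ => Intensional φ ∧ Intensional ψ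
  | box _ => True

/-- The set of variables occurring in a formula. -/
def vars : Fml → Set ℕ
  | tt x => {x}
  | ff x => {x}
  | Fml.neg φ => vars φ
  | Fml.and φ ψ => vars φ ∪ vars ψ
  | box φ => vars φ

/-- An `n`-formula: one whose atoms use only the variables `x_1, …, x_n`. -/
def IsNFormula (n : ℕ) (φ : Fml) : Prop := vars φ ⊆ {x | 1 ≤ x ∧ x ≤ n}

/-- A 1-formula: one whose atoms use only the single variable `x_1`. -/
abbrev Is1Formula (φ : Fml) : Prop := IsNFormula 1 φ

/-- `φ` is `Γ`-maximal for the system `S5[Ax]`. -/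
def GammaMaximal (Ax : Set Fml) (Γ : Set Fml) (φ : Fml) : Prop :=
  Consistent (Ax ∪ {φ}) ∧ φ ∈ Γ ∧
    ∀ ψ ∈ Γ, Prv Ax (imp φ ψ) ∨ Prv Ax (imp φ (neg ψ))

/-- Extensional `n`-isolators for `S5[Ax]`. -/
def ExtIsolator (n : ℕ) (Ax : Set Fml) (φ : Fml) : Prop :=
  GammaMaximal Ax {ψ | Extensional ψ ∧ IsNFormula n ψ} φ

/-- Intensional `n`-isolators for `S5[Ax]`. -/
def IntIsolator (n : ℕ) (Ax : Set Fml) (φ : Fml) : Prop :=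
  GammaMaximal Ax {ψ | Intensional ψ ∧ IsNFormula n ψ} φ

/-- An `n`-isolator for `S5[Ax]`: a consistent conjunction `ε ∧ ι` of an
extensional `n`-isolator and an intensional `n`-isolator. -/
def Isolator (n : ℕ) (Ax : Set Fml) (φ : Fml) : Prop :=
  ∃ ε ι, ExtIsolator n Ax ε ∧ IntIsolator n Ax ι ∧
    φ = Fml.and ε ι ∧ Consistent (Ax ∪ {φ})

/-- Satisfaction in a model `(W, V)` (with `V = (V1, V2)`) at a world `w`. -/
def Sat {W : Type*} (V1 V2 : ℕ → Set W) : W → Fml → Prop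
  | w, tt x => w ∈ V1 x
  | w, ff x => w ∈ V2 x
  | w, Fml.neg φ => ¬ Sat V1 V2 w φ
  | w, Fml.and φ ψ => Sat V1 V2 w φ ∧ Sat V1 V2 w ψ
  | _, box φ => ∀ v, Sat V1 V2 v φ

/-- The variable assignment satisfies the `Con` constraint. -/
def ConC {W : Type*} (V1 V2 : ℕ → Set W) : Prop := ∀ x, V1 x ∩ V2 x = ∅

/-- The variable assignment satisfies the `Ground` constraint. -/
def GroundC {W : Type*} (V1 V2 : ℕ → Set W) : Prop :=
  ∀ x, (V1 x).Nonempty → (V2 x).Nonempty → ((V1 x ∪ V2 x)ᶜ : Set W).Nonempty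

/-- The variable assignment satisfies the `Min` constraint. -/
def MinC {W : Type*} (V1 V2 : ℕ → Set W) : Prop :=
  ∀ l : List ℕ, l ≠ [] → (∀ x ∈ l, ((V1 x ∪ V2 x)ᶜ : Set W).Nonempty) →
    (⋂ x ∈ l, ((V1 x ∪ V2 x)ᶜ : Set W)).Nonempty

/-- The prime conditions for a subset `S` of the tensor `[3]^n`, realized as
`Fin n → Fin 3` where the value `0` stands for the layer `T`, `1` for `F`,
and `2` for `N` (i.e. `1, 2, 3` in the paper's numbering). -/
def PrimeConditions (n : ℕ) (S : Set (Fin n → Fin 3)) : Prop :=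
  S.Nonempty ∧
  (∀ j : Fin n, (S ∩ {a | a j = 0}).Nonempty → (S ∩ {a | a j = 1}).Nonempty →
      (S ∩ {a | a j = 2}).Nonempty) ∧
  ∀ J : Set (Fin n), J.Nonempty →
    (∀ j ∈ J, (S ∩ {a | a j = 2}).Nonempty) →
    (S ∩ ⋂ j ∈ J, {a | a j = 2}).Nonempty

/-- `χ_1 = T`, `χ_2 = F`, `χ_3 = N` (with `Fin 3` values `0, 1, 2`). -/
def chi (k : Fin 3) (x : ℕ) : Fml :=
  if k = 0 then tt x else if k = 1 then ff x else Nf x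

/-- The extensional `n`-isolator `φ_a = χ_{a_1}(x_1) ∧ … ∧ χ_{a_n}(x_n)`
associated with a tuple `a ∈ [3]^n`. -/
def tupleFml {n : ℕ} (a : Fin n → Fin 3) : Fml :=
  bigAnd ((List.finRange n).map (fun i => chi (a i) (i.1 + 1)))

open Classical in
/-- The pre-`n`-isolator of `S ⊆ [3]^n`:
`⋀_{a ∈ S} ◇φ_a ∧ ⋀_{a ∉ S} ¬◇φ_a`. -/
noncomputable def preIsolator (n : ℕ) (S : Set (Fin n → Fin 3)) : Fml :=
  bigAnd (((Finset.univ : Finset (Fin n → Fin 3)).toList).map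
    (fun a => if a ∈ S then dia (tupleFml a) else Fml.neg (dia (tupleFml a))))

open Fml

/-! ### Boolean evaluation lemmas -/

@[simp] lemma evalProp_neg (v : Fml → Bool) (φ : Fml) :
    evalProp v (Fml.neg φ) = !(evalProp v φ) := rfl
@[simp] lemma evalProp_and (v : Fml → Bool) (φ ψ : Fml) :
    evalProp v (Fml.and φ ψ) = (evalProp v φ && evalProp v ψ) := rfl
@[simp] lemma evalProp_tt (v : Fml → Bool) (x : ℕ) :
    evalProp v (Fml.tt x) = v (Fml.tt x) := rfl
@[simp] lemma evalProp_ff (v : Fml → Bool) (x : ℕ) :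
    evalProp v (Fml.ff x) = v (Fml.ff x) := rfl
@[simp] lemma evalProp_box (v : Fml → Bool) (φ : Fml) :
    evalProp v (Fml.box φ) = v (Fml.box φ) := rfl

/-! ### Satisfaction lemmas -/

variable {W : Type} {V1 V2 : ℕ → Set W}

lemma sat_neg (w : W) (A : Fml) : Sat V1 V2 w (Fml.neg A) ↔ ¬ Sat V1 V2 w A := Iff.rfl
lemma sat_and (w : W) (A B : Fml) :
    Sat V1 V2 w (Fml.and A B) ↔ Sat V1 V2 w A ∧ Sat V1 V2 w B := Iff.rfl
lemma sat_box (w : W) (A : Fml) : Sat V1 V2 w (Fml.box A) ↔ ∀ v, Sat V1 V2 v A := Iff.rfl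
lemma sat_tt (w : W) (x : ℕ) : Sat V1 V2 w (Fml.tt x) ↔ w ∈ V1 x := Iff.rfl
lemma sat_ff (w : W) (x : ℕ) : Sat V1 V2 w (Fml.ff x) ↔ w ∈ V2 x := Iff.rfl

lemma sat_imp (w : W) (A B : Fml) :
    Sat V1 V2 w (imp A B) ↔ (Sat V1 V2 w A → Sat V1 V2 w B) := by
  simp only [Fml.imp, sat_neg, sat_and]; tauto

lemma sat_dia (w : W) (A : Fml) :
    Sat V1 V2 w (dia A) ↔ ∃ v, Sat V1 V2 v A := by
  simp only [Fml.dia, sat_neg, sat_box, not_forall, not_not]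

lemma sat_Nf (w : W) (x : ℕ) :
    Sat V1 V2 w (Nf x) ↔ w ∉ V1 x ∧ w ∉ V2 x := Iff.rfl

lemma sat_bigAnd (w : W) :
    ∀ l : List Fml, (Sat V1 V2 w (bigAnd l) ↔ ∀ ψ ∈ l, Sat V1 V2 w ψ)
  | [] => by
      constructor
      · intro _ ψ hψ; simp at hψ
      · intro _
        show ¬ Sat V1 V2 w Fml.bot
        exact fun h => h.2 h.1
  | [φ] => by simp [bigAnd]
  | φ :: ψ :: r => by
      rw [show bigAnd (φ :: ψ :: r) = Fml.and φ (bigAnd (ψ :: r)) from rfl, sat_and,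
        sat_bigAnd w (ψ :: r)]
      simp only [List.mem_cons]
      constructor
      · rintro ⟨h1, h2⟩ χ (rfl | h) <;> [exact h1; exact h2 _ (by simpa using h)]
      · intro h; exact ⟨h _ (Or.inl rfl), fun χ hχ => h _ (Or.inr hχ)⟩

lemma sat_of_tautology (w : W) {φ : Fml} (h : Tautology φ) : Sat V1 V2 w φ := by
  classical
  have key : ∀ ψ : Fml, evalProp (fun χ => decide (Sat V1 V2 w χ)) ψ
      = decide (Sat V1 V2 w ψ) := by
    intro ψ
    induction ψ with
    | neg φ ih => simp [sat_neg, ih]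
    | and φ ψ ih1 ih2 => simp [sat_and, ih1, ih2]
    | _ => rfl
  have := h (fun χ => decide (Sat V1 V2 w χ))
  rw [key] at this
  exact of_decide_eq_true this

/-! ### Soundness -/

lemma soundness_core {Ax : Set Fml} {φ : Fml} (h : Prv Ax φ)
    (hAx : ∀ ψ ∈ Ax, ∀ w : W, Sat V1 V2 w ψ) : ∀ w, Sat V1 V2 w φ := by
  induction h with
  | taut ht => exact fun w => sat_of_tautology w ht
  | axK A B =>
      intro w
      rw [sat_imp]; intro h1
      rw [sat_imp]; intro h2
      rw [sat_box]; intro v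
      exact (sat_imp v A B).mp ((sat_box w _).mp h1 v) ((sat_box w _).mp h2 v)
  | axT A => intro w; rw [sat_imp]; exact fun h => (sat_box w A).mp h w
  | ax5 A =>
      intro w
      rw [sat_imp]; intro h
      rw [sat_box]; intro v
      rw [sat_dia] at h ⊢; exact h
  | axm hm => exact hAx _ hm
  | mp _ _ ih1 ih2 => exact fun w => (sat_imp w _ _).mp (ih1 w) (ih2 w)
  | nec _ ih => intro w; rw [sat_box]; exact ih

lemma conAx_valid (hCon : ConC V1 V2) : ∀ ψ ∈ ConAx, ∀ w : W, Sat V1 V2 w ψ := by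
  rintro ψ ⟨x, rfl⟩ w
  rw [sat_neg, sat_and]
  rintro ⟨h1, h2⟩
  have := hCon x
  have : w ∈ V1 x ∩ V2 x := ⟨h1, h2⟩
  rw [hCon x] at this
  exact this

lemma groundAx_valid (hG : GroundC V1 V2) : ∀ ψ ∈ GroundAx, ∀ w : W, Sat V1 V2 w ψ := by
  rintro ψ ⟨x, rfl⟩ w
  rw [sat_imp]
  rintro ⟨h1, h2⟩
  rw [sat_dia] at h1 h2
  obtain ⟨u, hu⟩ := h1
  obtain ⟨u', hu'⟩ := h2
  obtain ⟨z, hz⟩ := hG x ⟨u, hu⟩ ⟨u', hu'⟩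
  rw [sat_dia]
  refine ⟨z, ?_⟩
  rw [sat_Nf]
  simpa [Set.mem_compl_iff, Set.mem_union, not_or] using hz

lemma minAx_valid {n : ℕ} (hn : 1 ≤ n) (hM : MinC V1 V2) :
    ∀ ψ ∈ MinAx n, ∀ w : W, Sat V1 V2 w ψ := by
  rintro ψ ⟨l, hlen, rfl⟩ w
  rw [sat_imp]
  intro h
  rw [sat_bigAnd] at h
  have hco : ∀ x ∈ l, ((V1 x ∪ V2 x)ᶜ : Set W).Nonempty := by
    intro x hx
    have := h _ (List.mem_map_of_mem hx)
    rw [sat_dia] at this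
    obtain ⟨u, hu⟩ := this
    rw [sat_Nf] at hu
    exact ⟨u, by simp [Set.mem_compl_iff, Set.mem_union, hu.1, hu.2]⟩
  have hne : l ≠ [] := by
    intro e; rw [e] at hlen; simp at hlen; omega
  obtain ⟨u, hu⟩ := hM l hne hco
  rw [sat_dia]
  refine ⟨u, ?_⟩
  rw [sat_bigAnd]
  intro χ hχ
  rw [List.mem_map] at hχ
  obtain ⟨x, hx, rfl⟩ := hχ
  rw [sat_Nf]
  have := Set.mem_iInter₂.mp hu x hx
  simpa [Set.mem_compl_iff, Set.mem_union, not_or] using this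

/-! ### Propositional toolkit for `Prv` -/

section PrvToolkit

variable {Ax : Set Fml}

lemma taut1 {A B : Fml} (h : Tautology (imp A B)) (ha : Prv Ax A) : Prv Ax B :=
  Prv.mp (Prv.taut h) ha

lemma taut2 {A B C : Fml} (h : Tautology (imp A (imp B C)))
    (ha : Prv Ax A) (hb : Prv Ax B) : Prv Ax C :=
  Prv.mp (taut1 h ha) hb

lemma taut3 {A B C D : Fml} (h : Tautology (imp A (imp B (imp C D))))
    (ha : Prv Ax A) (hb : Prv Ax B) (hc : Prv Ax C) : Prv Ax D :=
  Prv.mp (taut2 h ha hb) hc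

lemma pl_id (A : Fml) : Prv Ax (imp A A) := by
  apply Prv.taut; intro v
  simp only [Fml.imp, evalProp_neg, evalProp_and]
  cases evalProp v A <;> rfl

lemma imp_trans {A B C : Fml} (h1 : Prv Ax (imp A B)) (h2 : Prv Ax (imp B C)) :
    Prv Ax (imp A C) := by
  refine taut2 ?_ h1 h2
  intro v
  simp only [Fml.imp, evalProp_neg, evalProp_and]
  cases evalProp v A <;> cases evalProp v B <;> cases evalProp v C <;> rfl

lemma and_left (A B : Fml) : Prv Ax (imp (Fml.and A B) A) := by
  apply Prv.taut; intro v
  simp only [Fml.imp, evalProp_neg, evalProp_and]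
  cases evalProp v A <;> cases evalProp v B <;> rfl

lemma and_right (A B : Fml) : Prv Ax (imp (Fml.and A B) B) := by
  apply Prv.taut; intro v
  simp only [Fml.imp, evalProp_neg, evalProp_and]
  cases evalProp v A <;> cases evalProp v B <;> rfl

lemma and_intro_imp {A B C : Fml} (h1 : Prv Ax (imp A B)) (h2 : Prv Ax (imp A C)) :
    Prv Ax (imp A (Fml.and B C)) := by
  refine taut2 ?_ h1 h2
  intro v
  simp only [Fml.imp, evalProp_neg, evalProp_and]
  cases evalProp v A <;> cases evalProp v B <;> cases evalProp v C <;> rfl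

lemma and_intro {A B : Fml} (h1 : Prv Ax A) (h2 : Prv Ax B) :
    Prv Ax (Fml.and A B) := by
  refine taut2 ?_ h1 h2
  intro v
  simp only [Fml.imp, evalProp_neg, evalProp_and]
  cases evalProp v A <;> cases evalProp v B <;> rfl

lemma contrapose' {A B : Fml} (h : Prv Ax (imp A B)) :
    Prv Ax (imp (Fml.neg B) (Fml.neg A)) := by
  refine taut1 ?_ h
  intro v
  simp only [Fml.imp, evalProp_neg, evalProp_and]
  cases evalProp v A <;> cases evalProp v B <;> rfl

lemma prv_neg_bot : Prv Ax (Fml.neg Fml.bot) := by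
  apply Prv.taut; intro v
  simp only [Fml.bot, evalProp_neg, evalProp_and, evalProp_tt]
  cases v (Fml.tt 0) <;> rfl

lemma prv_of_neg_imp_bot {A : Fml} (h : Prv Ax (imp (Fml.neg A) Fml.bot)) : Prv Ax A := by
  refine taut1 ?_ h
  intro v
  simp only [Fml.imp, Fml.bot, evalProp_neg, evalProp_and, evalProp_tt]
  cases evalProp v A <;> cases v (Fml.tt 0) <;> rfl

/-! ### bigAnd lemmas -/

lemma prv_bigAnd_cons_elim1 (φ : Fml) (l : List Fml) :
    Prv Ax (imp (bigAnd (φ :: l)) φ) := by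
  cases l with
  | nil => exact pl_id φ
  | cons ψ r => exact and_left φ (bigAnd (ψ :: r))

lemma prv_bigAnd_cons_elim2 (φ : Fml) (l : List Fml) :
    Prv Ax (imp (bigAnd (φ :: l)) (bigAnd l)) := by
  cases l with
  | nil =>
      apply Prv.taut; intro v
      simp only [bigAnd, Fml.imp, Fml.bot, evalProp_neg, evalProp_and, evalProp_tt]
      cases evalProp v φ <;> cases v (Fml.tt 0) <;> rfl
  | cons ψ r => exact and_right φ (bigAnd (ψ :: r))

lemma prv_bigAnd_cons_intro {C φ : Fml} {l : List Fml}
    (h1 : Prv Ax (imp C φ)) (h2 : Prv Ax (imp C (bigAnd l))) :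
    Prv Ax (imp C (bigAnd (φ :: l))) := by
  cases l with
  | nil => exact h1
  | cons ψ r => exact and_intro_imp h1 h2

lemma prv_bigAnd_mem {ψ : Fml} : ∀ {l : List Fml}, ψ ∈ l → Prv Ax (imp (bigAnd l) ψ)
  | [], h => by simp at h
  | φ :: l, h => by
      rcases List.mem_cons.mp h with rfl | h
      · exact prv_bigAnd_cons_elim1 _ _
      · exact imp_trans (prv_bigAnd_cons_elim2 _ _) (prv_bigAnd_mem h)

lemma prv_imp_bigAnd {C : Fml} :
    ∀ {l : List Fml}, (∀ ψ ∈ l, Prv Ax (imp C ψ)) → Prv Ax (imp C (bigAnd l))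
  | [], _ => by
      apply Prv.taut; intro v
      simp only [bigAnd, Fml.imp, Fml.bot, evalProp_neg, evalProp_and, evalProp_tt]
      cases evalProp v C <;> cases v (Fml.tt 0) <;> rfl
  | φ :: l, h =>
      prv_bigAnd_cons_intro (h _ List.mem_cons_self)
        (prv_imp_bigAnd fun ψ hψ => h _ (List.mem_cons_of_mem _ hψ))

lemma prv_bigAnd (l : List Fml) (h : ∀ ψ ∈ l, Prv Ax ψ) : Prv Ax (bigAnd l) := by
  have h1 : Prv Ax (imp (Fml.neg Fml.bot) (bigAnd l)) := by
    apply prv_imp_bigAnd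
    intro ψ hψ
    refine taut1 ?_ (h ψ hψ)
    intro v
    simp only [Fml.imp, Fml.bot, evalProp_neg, evalProp_and, evalProp_tt]
    cases evalProp v ψ <;> cases v (Fml.tt 0) <;> rfl
  exact Prv.mp h1 prv_neg_bot

end PrvToolkit

/-! ### Derivability from a set, consistency, maximal consistent sets -/

/-- `ψ` is derivable in `S5[Ax]` from the set of assumptions `Γ`. -/
def PrvFrom (Ax Γ : Set Fml) (ψ : Fml) : Prop :=
  ∃ l : List Fml, (∀ χ ∈ l, χ ∈ Γ) ∧ Prv Ax (imp (bigAnd l) ψ)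

/-- `Γ` is consistent over `S5[Ax]`. -/
def ConsSet (Ax Γ : Set Fml) : Prop := ¬ PrvFrom Ax Γ Fml.bot

/-- Maximal consistent set. -/
def MCS (Ax Γ : Set Fml) : Prop := ConsSet Ax Γ ∧ ∀ ψ, ψ ∈ Γ ∨ Fml.neg ψ ∈ Γ

section PrvFrom

variable {Ax Γ : Set Fml} {A B ψ : Fml}

lemma PrvFrom.of_prv (h : Prv Ax ψ) : PrvFrom Ax Γ ψ := by
  refine ⟨[], by simp, ?_⟩
  refine taut1 ?_ h
  intro v
  simp only [bigAnd, Fml.imp, Fml.bot, evalProp_neg, evalProp_and, evalProp_tt]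
  cases evalProp v ψ <;> cases v (Fml.tt 0) <;> rfl

lemma PrvFrom.of_mem (h : ψ ∈ Γ) : PrvFrom Ax Γ ψ :=
  ⟨[ψ], by simpa using h, pl_id ψ⟩

lemma PrvFrom.mono {Γ' : Set Fml} (hs : Γ ⊆ Γ') (h : PrvFrom Ax Γ ψ) : PrvFrom Ax Γ' ψ := by
  obtain ⟨l, hl, hp⟩ := h
  exact ⟨l, fun χ hχ => hs (hl χ hχ), hp⟩

lemma PrvFrom.mp (h1 : PrvFrom Ax Γ (imp A B)) (h2 : PrvFrom Ax Γ A) : PrvFrom Ax Γ B := by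
  obtain ⟨l1, hl1, hp1⟩ := h1
  obtain ⟨l2, hl2, hp2⟩ := h2
  refine ⟨l1 ++ l2, ?_, ?_⟩
  · intro χ hχ
    rcases List.mem_append.mp hχ with h | h
    · exact hl1 χ h
    · exact hl2 χ h
  · have e1 : Prv Ax (imp (bigAnd (l1 ++ l2)) (bigAnd l1)) :=
      prv_imp_bigAnd fun χ hχ => prv_bigAnd_mem (List.mem_append_left _ hχ)
    have e2 : Prv Ax (imp (bigAnd (l1 ++ l2)) (bigAnd l2)) :=
      prv_imp_bigAnd fun χ hχ => prv_bigAnd_mem (List.mem_append_right _ hχ)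
    have f1 := imp_trans e1 hp1
    have f2 := imp_trans e2 hp2
    refine taut2 ?_ f1 f2
    intro v
    set X := bigAnd (l1 ++ l2)
    simp only [Fml.imp, evalProp_neg, evalProp_and]
    cases evalProp v X <;> cases evalProp v A <;> cases evalProp v B <;> rfl

lemma PrvFrom.deduction (h : PrvFrom Ax (Γ ∪ {A}) B) : PrvFrom Ax Γ (imp A B) := by
  classical
  obtain ⟨l, hl, hp⟩ := h
  set l' : List Fml := l.filter (fun χ => χ ≠ A) with hl'
  refine ⟨l', ?_, ?_⟩
  · intro χ hχ
    rw [hl', List.mem_filter] at hχ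
    rcases hl χ hχ.1 with h | h
    · exact h
    · exfalso; simp at hχ h; exact hχ.2 h
  · have key : Prv Ax (imp (Fml.and A (bigAnd l')) (bigAnd l)) := by
      apply prv_imp_bigAnd
      intro χ hχ
      by_cases hc : χ = A
      · subst hc; exact and_left _ _
      · have : χ ∈ l' := by rw [hl', List.mem_filter]; simp [hχ, hc]
        exact imp_trans (and_right _ _) (prv_bigAnd_mem this)
    have : Prv Ax (imp (Fml.and A (bigAnd l')) B) := imp_trans key hp
    refine taut1 ?_ this
    intro v
    set X := bigAnd l'
    simp only [Fml.imp, evalProp_neg, evalProp_and]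
    cases evalProp v X <;> cases evalProp v A <;> cases evalProp v B <;> rfl

lemma ConsSet.mono {Γ' : Set Fml} (hs : Γ ⊆ Γ') (h : ConsSet Ax Γ') : ConsSet Ax Γ :=
  fun hc => h (hc.mono hs)

end PrvFrom

section MCSLemmas

variable {Ax Γ : Set Fml} {A B ψ : Fml}

lemma MCS.not_both (h : MCS Ax Γ) (h1 : ψ ∈ Γ) (h2 : Fml.neg ψ ∈ Γ) : False := by
  apply h.1
  have t : Prv Ax (imp ψ (imp (Fml.neg ψ) Fml.bot)) := by
    apply Prv.taut; intro v
    simp only [Fml.imp, Fml.bot, evalProp_neg, evalProp_and, evalProp_tt]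
    cases evalProp v ψ <;> cases v (Fml.tt 0) <;> rfl
  exact (PrvFrom.of_prv t).mp (PrvFrom.of_mem h1) |>.mp (PrvFrom.of_mem h2)

lemma MCS.mem_of_prvFrom (h : MCS Ax Γ) (hp : PrvFrom Ax Γ ψ) : ψ ∈ Γ := by
  rcases h.2 ψ with hm | hm
  · exact hm
  · exfalso
    apply h.1
    have t : Prv Ax (imp ψ (imp (Fml.neg ψ) Fml.bot)) := by
      apply Prv.taut; intro v
      simp only [Fml.imp, Fml.bot, evalProp_neg, evalProp_and, evalProp_tt]
      cases evalProp v ψ <;> cases v (Fml.tt 0) <;> rfl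
    exact (PrvFrom.of_prv t).mp hp |>.mp (PrvFrom.of_mem hm)

lemma MCS.mem_of_prv (h : MCS Ax Γ) (hp : Prv Ax ψ) : ψ ∈ Γ :=
  h.mem_of_prvFrom (PrvFrom.of_prv hp)

lemma MCS.mp_closed (h : MCS Ax Γ) (h1 : imp A B ∈ Γ) (h2 : A ∈ Γ) : B ∈ Γ :=
  h.mem_of_prvFrom ((PrvFrom.of_mem h1).mp (PrvFrom.of_mem h2))

lemma MCS.mp_prv (h : MCS Ax Γ) (h1 : Prv Ax (imp A B)) (h2 : A ∈ Γ) : B ∈ Γ :=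
  h.mem_of_prvFrom ((PrvFrom.of_prv h1).mp (PrvFrom.of_mem h2))

lemma MCS.neg_mem_iff (h : MCS Ax Γ) : Fml.neg ψ ∈ Γ ↔ ψ ∉ Γ := by
  constructor
  · intro h1 h2; exact h.not_both h2 h1
  · intro h1; rcases h.2 ψ with hm | hm
    · exact absurd hm h1
    · exact hm

lemma MCS.and_mem_iff (h : MCS Ax Γ) : Fml.and A B ∈ Γ ↔ A ∈ Γ ∧ B ∈ Γ := by
  constructor
  · intro h1
    exact ⟨h.mp_prv (and_left A B) h1, h.mp_prv (and_right A B) h1⟩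
  · rintro ⟨h1, h2⟩
    have t : Prv Ax (imp A (imp B (Fml.and A B))) := by
      apply Prv.taut; intro v
      simp only [Fml.imp, evalProp_neg, evalProp_and]
      cases evalProp v A <;> cases evalProp v B <;> rfl
    exact h.mem_of_prvFrom
      ((PrvFrom.of_prv t).mp (PrvFrom.of_mem h1) |>.mp (PrvFrom.of_mem h2))

lemma MCS.bigAnd_mem (h : MCS Ax Γ) {l : List Fml} (hl : ∀ χ ∈ l, χ ∈ Γ) :
    bigAnd l ∈ Γ :=
  h.mem_of_prvFrom ⟨l, hl, pl_id _⟩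

end MCSLemmas

/-! ### Lindenbaum's lemma -/

section Lindenbaum

variable {Ax : Set Fml}

private lemma chain_mem_list {c : Set (Set Fml)} (hc : IsChain (· ⊆ ·) c)
    (hne : c.Nonempty) :
    ∀ l : List Fml, (∀ χ ∈ l, ∃ t ∈ c, χ ∈ t) → ∃ t ∈ c, ∀ χ ∈ l, χ ∈ t := by
  intro l
  induction l with
  | nil => exact fun _ => ⟨hne.choose, hne.choose_spec, by simp⟩
  | cons a l ih =>
      intro h
      obtain ⟨t, htc, ht⟩ := ih fun χ hχ => h χ (List.mem_cons_of_mem _ hχ)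
      obtain ⟨s, hsc, hs⟩ := h a List.mem_cons_self
      rcases hc.total htc hsc with hts | hst
      · refine ⟨s, hsc, ?_⟩
        intro χ hχ
        rcases List.mem_cons.mp hχ with rfl | hχ
        · exact hs
        · exact hts (ht χ hχ)
      · refine ⟨t, htc, ?_⟩
        intro χ hχ
        rcases List.mem_cons.mp hχ with rfl | hχ
        · exact hst hs
        · exact ht χ hχ

lemma lindenbaum {Γ : Set Fml} (h : ConsSet Ax Γ) : ∃ Δ, Γ ⊆ Δ ∧ MCS Ax Δ := by
  have H : ∀ c ⊆ {Γ' | ConsSet Ax Γ'}, IsChain (· ⊆ ·) c → c.Nonempty →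
      ∃ ub ∈ {Γ' | ConsSet Ax Γ'}, ∀ s ∈ c, s ⊆ ub := by
    intro c hcS hchain hcne
    refine ⟨⋃₀ c, ?_, fun s hs => Set.subset_sUnion_of_mem hs⟩
    intro hbad
    obtain ⟨l, hl, hp⟩ := hbad
    obtain ⟨t, htc, ht⟩ := chain_mem_list hchain hcne l fun χ hχ => hl χ hχ
    exact hcS htc ⟨l, ht, hp⟩
  obtain ⟨m, hm, hmax⟩ := zorn_subset_nonempty {Γ' | ConsSet Ax Γ'} H Γ h
  · refine ⟨m, hm, hmax.prop, ?_⟩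
    intro ψ
    by_contra hcon
    push_neg at hcon
    obtain ⟨h1, h2⟩ := hcon
    have key : ∀ χ : Fml, χ ∉ m → PrvFrom Ax m (imp χ Fml.bot) := by
      intro χ hχ
      have : ¬ ConsSet Ax (m ∪ {χ}) := by
        intro hcs
        have := hmax.eq_of_subset hcs Set.subset_union_left
        exact hχ (this ▸ Set.mem_union_right _ rfl)
      rw [ConsSet, not_not] at this
      exact this.deduction
    have k1 := key ψ h1
    have k2 := key (Fml.neg ψ) h2
    apply hmax.prop
    have t : Prv Ax (imp (imp ψ Fml.bot) (imp (imp (Fml.neg ψ) Fml.bot) Fml.bot)) := by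
      apply Prv.taut; intro v
      simp only [Fml.imp, Fml.bot, evalProp_neg, evalProp_and, evalProp_tt]
      cases evalProp v ψ <;> cases v (Fml.tt 0) <;> rfl
    exact ((PrvFrom.of_prv t).mp k1).mp k2

end Lindenbaum

/-! ### S5 modal derivations -/

section Modal

variable {Ax : Set Fml} {A B : Fml}

lemma box_mono (h : Prv Ax (imp A B)) : Prv Ax (imp (Fml.box A) (Fml.box B)) :=
  Prv.mp (Prv.axK A B) (Prv.nec h)

lemma prv_dne (A : Fml) : Prv Ax (imp (Fml.neg (Fml.neg A)) A) := by
  apply Prv.taut; intro v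
  simp only [Fml.imp, evalProp_neg, evalProp_and]
  cases evalProp v A <;> rfl

lemma prv_dni (A : Fml) : Prv Ax (imp A (Fml.neg (Fml.neg A))) := by
  apply Prv.taut; intro v
  simp only [Fml.imp, evalProp_neg, evalProp_and]
  cases evalProp v A <;> rfl

/-- `□¬¬A → □A`. -/
lemma box_dne (A : Fml) : Prv Ax (imp (Fml.box (Fml.neg (Fml.neg A))) (Fml.box A)) :=
  box_mono (prv_dne A)

/-- `□A → □¬¬A`. -/
lemma box_dni (A : Fml) : Prv Ax (imp (Fml.box A) (Fml.box (Fml.neg (Fml.neg A)))) :=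
  box_mono (prv_dni A)

lemma neg_mono {A B : Fml} (h : Prv Ax (imp A B)) :
    Prv Ax (imp (Fml.neg B) (Fml.neg A)) := contrapose' h

/-- `¬□A → □¬□A` (a key S5 fact). -/
lemma negbox_box (A : Fml) :
    Prv Ax (imp (Fml.neg (Fml.box A)) (Fml.box (Fml.neg (Fml.box A)))) := by
  have five : Prv Ax (imp (dia (Fml.neg A)) (Fml.box (dia (Fml.neg A)))) :=
    Prv.ax5 (Fml.neg A)
  -- dia (neg A) = neg (box (neg (neg A)))
  have c1 : Prv Ax (imp (Fml.neg (Fml.box A)) (dia (Fml.neg A))) :=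
    neg_mono (box_dne A)
  have c2 : Prv Ax (imp (dia (Fml.neg A)) (Fml.neg (Fml.box A))) :=
    neg_mono (box_dni A)
  exact imp_trans (imp_trans c1 five) (box_mono c2)

/-- `◇□A → □A`, in the form `¬□¬□A → □A`. -/
lemma diabox_box (A : Fml) :
    Prv Ax (imp (Fml.neg (Fml.box (Fml.neg (Fml.box A)))) (Fml.box A)) := by
  have := negbox_box (Ax := Ax) A
  -- contrapose: ¬□¬□A → ¬¬□A → □A
  exact imp_trans (imp_trans (neg_mono this) (prv_dne _)) (pl_id _)

/-- `A → ◇A`, in the form `A → ¬□¬A`. -/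
lemma prv_dia_intro (A : Fml) : Prv Ax (imp A (Fml.neg (Fml.box (Fml.neg A)))) := by
  have t : Prv Ax (imp (Fml.box (Fml.neg A)) (Fml.neg A)) := Prv.axT (Fml.neg A)
  exact imp_trans (prv_dni A) (neg_mono t)

/-- Axiom 4: `□A → □□A`. -/
lemma prv_ax4 (A : Fml) : Prv Ax (imp (Fml.box A) (Fml.box (Fml.box A))) := by
  have h1 : Prv Ax (imp (Fml.box A) (dia (Fml.box A))) := prv_dia_intro (Fml.box A)
  have h2 : Prv Ax (imp (dia (Fml.box A)) (Fml.box (dia (Fml.box A)))) :=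
    Prv.ax5 (Fml.box A)
  have h3 : Prv Ax (imp (Fml.box (dia (Fml.box A))) (Fml.box (Fml.box A))) :=
    box_mono (diabox_box A)
  exact imp_trans (imp_trans h1 h2) h3

/-- `□A ∧ □B → □(A ∧ B)`. -/
lemma box_and_combine (A B : Fml) :
    Prv Ax (imp (Fml.and (Fml.box A) (Fml.box B)) (Fml.box (Fml.and A B))) := by
  have t : Prv Ax (imp A (imp B (Fml.and A B))) := by
    apply Prv.taut; intro v
    simp only [Fml.imp, evalProp_neg, evalProp_and]
    cases evalProp v A <;> cases evalProp v B <;> rfl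
  have h1 : Prv Ax (imp (Fml.box A) (Fml.box (imp B (Fml.and A B)))) := box_mono t
  have h2 := Prv.axK (Ax := Ax) B (Fml.and A B)
  have h3 : Prv Ax (imp (Fml.box A) (imp (Fml.box B) (Fml.box (Fml.and A B)))) :=
    imp_trans h1 h2
  refine taut1 ?_ h3
  intro v
  set X := Fml.box A; set Y := Fml.box B; set Z := Fml.box (Fml.and A B)
  simp only [Fml.imp, evalProp_neg, evalProp_and]
  cases evalProp v X <;> cases evalProp v Y <;> cases evalProp v Z <;> rfl

/-- `⋀ᵢ □Aᵢ → □⋀ᵢ Aᵢ`. -/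
lemma bigAnd_box : ∀ l : List Fml,
    Prv Ax (imp (bigAnd (l.map Fml.box)) (Fml.box (bigAnd l)))
  | [] => by
      have h1 : Prv Ax (Fml.box (bigAnd [])) := Prv.nec prv_neg_bot
      refine taut1 ?_ h1
      intro v
      set X := Fml.box (bigAnd [])
      simp only [bigAnd, List.map_nil, Fml.imp, Fml.bot, evalProp_neg, evalProp_and, evalProp_tt]
      cases evalProp v X <;> cases v (Fml.tt 0) <;> rfl
  | φ :: l => by
      have e1 : Prv Ax (imp (bigAnd (Fml.box φ :: l.map Fml.box)) (Fml.box φ)) :=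
        prv_bigAnd_cons_elim1 _ _
      have e2 : Prv Ax (imp (bigAnd (Fml.box φ :: l.map Fml.box)) (Fml.box (bigAnd l))) :=
        imp_trans (prv_bigAnd_cons_elim2 _ _) (bigAnd_box l)
      have pair := and_intro_imp e1 e2
      have h1 := imp_trans pair (box_and_combine φ (bigAnd l))
      have h2 : Prv Ax (imp (Fml.and φ (bigAnd l)) (bigAnd (φ :: l))) :=
        prv_bigAnd_cons_intro (and_left _ _) (and_right _ _)
      simpa using imp_trans h1 (box_mono h2)

end Modal

/-! ### The canonical model -/

section Canonical

variable {Ax : Set Fml}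

/-- Existence lemma: if `◇ψ ∈ Γ` for a maximal consistent `Γ`, there is a maximal
consistent `Δ` containing `ψ` and everything boxed in `Γ`. -/
lemma exists_mcs_dia {Γ : Set Fml} (hΓ : MCS Ax Γ) {ψ : Fml} (h : dia ψ ∈ Γ) :
    ∃ Δ, MCS Ax Δ ∧ ψ ∈ Δ ∧ ∀ χ, Fml.box χ ∈ Γ → χ ∈ Δ := by
  have hc : ConsSet Ax ({χ | Fml.box χ ∈ Γ} ∪ {ψ}) := by
    intro hbad
    have hd : PrvFrom Ax {χ | Fml.box χ ∈ Γ} (imp ψ Fml.bot) := PrvFrom.deduction hbad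
    obtain ⟨l, hl, hp⟩ := hd
    have hnψ : Prv Ax (imp (bigAnd l) (Fml.neg ψ)) := by
      refine taut1 ?_ hp
      intro v
      set X := bigAnd l
      simp only [Fml.imp, Fml.bot, evalProp_neg, evalProp_and, evalProp_tt]
      cases evalProp v X <;> cases evalProp v ψ <;> cases v (Fml.tt 0) <;> rfl
    have hbox : Prv Ax (imp (bigAnd (l.map Fml.box)) (Fml.box (Fml.neg ψ))) :=
      imp_trans (bigAnd_box l) (box_mono hnψ)
    have hmem : bigAnd (l.map Fml.box) ∈ Γ := by
      apply hΓ.bigAnd_mem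
      intro χ hχ
      rw [List.mem_map] at hχ
      obtain ⟨χ', hχ', rfl⟩ := hχ
      exact hl χ' hχ'
    have : Fml.box (Fml.neg ψ) ∈ Γ := hΓ.mp_prv hbox hmem
    exact hΓ.not_both this h
  obtain ⟨Δ, hsub, hΔ⟩ := lindenbaum hc
  exact ⟨Δ, hΔ, hsub (Set.mem_union_right _ rfl),
    fun χ hχ => hsub (Set.mem_union_left _ hχ)⟩

lemma box_iff_of_sub {Γ Δ : Set Fml} (hΓ : MCS Ax Γ) (hΔ : MCS Ax Δ)
    (hsub : ∀ χ, Fml.box χ ∈ Γ → χ ∈ Δ) :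
    ∀ χ, Fml.box χ ∈ Γ ↔ Fml.box χ ∈ Δ := by
  intro χ
  constructor
  · intro h
    exact hsub _ (hΓ.mp_prv (prv_ax4 χ) h)
  · intro h
    by_contra hne
    have h1 : Fml.neg (Fml.box χ) ∈ Γ := hΓ.neg_mem_iff.mpr hne
    have h2 : Fml.box (Fml.neg (Fml.box χ)) ∈ Γ := hΓ.mp_prv (negbox_box χ) h1
    have h3 : Fml.neg (Fml.box χ) ∈ Δ := hsub _ h2
    exact hΔ.not_both h h3

variable (Ax) in
/-- The worlds of the canonical model over a maximal consistent `Γ0`. -/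
def Wld (Γ0 : Set Fml) : Type :=
  {Δ : Set Fml // MCS Ax Δ ∧ ∀ χ, (Fml.box χ ∈ Γ0 ↔ Fml.box χ ∈ Δ)}

variable (Ax) in
/-- Canonical first valuation (for variables `1 ≤ x ≤ n`). -/
def cV1 (Γ0 : Set Fml) (n : ℕ) : ℕ → Set (Wld Ax Γ0) := fun x =>
  if 1 ≤ x ∧ x ≤ n then {Δ | Fml.tt x ∈ Δ.1} else ∅

variable (Ax) in
/-- Canonical second valuation. -/
def cV2 (Γ0 : Set Fml) (n : ℕ) : ℕ → Set (Wld Ax Γ0) := fun x =>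
  if 1 ≤ x ∧ x ≤ n then {Δ | Fml.ff x ∈ Δ.1} else ∅

variable {Γ0 : Set Fml} {n : ℕ}

/-- `◇ψ ∈ Γ0` whenever `ψ` holds in some canonical world. -/
lemma dia_mem_of_wld (hΓ0 : MCS Ax Γ0) (Δ : Wld Ax Γ0) {ψ : Fml} (h : ψ ∈ Δ.1) :
    dia ψ ∈ Γ0 := by
  by_contra hne
  have h1 : Fml.neg (dia ψ) ∈ Γ0 := hΓ0.neg_mem_iff.mpr hne
  have h2 : Fml.box (Fml.neg ψ) ∈ Γ0 := hΓ0.mp_prv (prv_dne _) h1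
  have h3 : Fml.box (Fml.neg ψ) ∈ Δ.1 := (Δ.2.2 _).mp h2
  have h4 : Fml.neg ψ ∈ Δ.1 := Δ.2.1.mp_prv (Prv.axT _) h3
  exact Δ.2.1.not_both h h4

/-- The truth lemma for `n`-formulas. -/
lemma truth_lemma (hΓ0 : MCS Ax Γ0) :
    ∀ ψ : Fml, IsNFormula n ψ → ∀ Δ : Wld Ax Γ0,
      (Sat (cV1 Ax Γ0 n) (cV2 Ax Γ0 n) Δ ψ ↔ ψ ∈ Δ.1) := by
  intro ψ
  induction ψ with
  | tt x =>
      intro hv Δ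
      have hx : 1 ≤ x ∧ x ≤ n := hv (by simp [vars])
      rw [sat_tt, cV1, if_pos hx]
      rfl
  | ff x =>
      intro hv Δ
      have hx : 1 ≤ x ∧ x ≤ n := hv (by simp [vars])
      rw [sat_ff, cV2, if_pos hx]
      rfl
  | neg φ ih =>
      intro hv Δ
      have hφ : IsNFormula n φ := hv
      rw [sat_neg, ih hφ Δ, Δ.2.1.neg_mem_iff]
  | and φ χ ih1 ih2 =>
      intro hv Δ
      have hφ : IsNFormula n φ := fun x hx => hv (Set.mem_union_left _ hx)
      have hχ : IsNFormula n χ := fun x hx => hv (Set.mem_union_right _ hx)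
      rw [sat_and, ih1 hφ Δ, ih2 hχ Δ, Δ.2.1.and_mem_iff]
  | box φ ih =>
      intro hv Δ
      have hφ : IsNFormula n φ := hv
      rw [sat_box]
      constructor
      · intro h
        by_contra hne
        have hne0 : Fml.box φ ∉ Γ0 := fun hc => hne ((Δ.2.2 _).mp hc)
        have h1 : Fml.neg (Fml.box φ) ∈ Γ0 := hΓ0.neg_mem_iff.mpr hne0
        have h2 : dia (Fml.neg φ) ∈ Γ0 := hΓ0.mp_prv (neg_mono (box_dne φ)) h1
        obtain ⟨Δ', hΔ', hmem, hsub⟩ := exists_mcs_dia hΓ0 h2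
        have hW : ∀ χ, Fml.box χ ∈ Γ0 ↔ Fml.box χ ∈ Δ' :=
          box_iff_of_sub hΓ0 hΔ' hsub
        have := (ih hφ ⟨Δ', hΔ', hW⟩).mp (h ⟨Δ', hΔ', hW⟩)
        exact hΔ'.not_both this hmem
      · intro h Δ'
        have h0 : Fml.box φ ∈ Γ0 := (Δ.2.2 _).mpr h
        have h1 : Fml.box φ ∈ Δ'.1 := (Δ'.2.2 _).mp h0
        exact (ih hφ Δ').mpr (Δ'.2.1.mp_prv (Prv.axT _) h1)

end Canonical

/-! ### The canonical model satisfies the constraints -/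

section Constraints

variable {Ax Γ0 : Set Fml} {n : ℕ}

lemma canonical_ConC (hCon : ConAx ⊆ Ax) : ConC (cV1 Ax Γ0 n) (cV2 Ax Γ0 n) := by
  intro x
  rw [Set.eq_empty_iff_forall_notMem]
  rintro Δ ⟨h1, h2⟩
  rw [cV1] at h1; rw [cV2] at h2
  by_cases hx : 1 ≤ x ∧ x ≤ n
  · rw [if_pos hx] at h1 h2
    have hax : Fml.neg (Fml.and (Fml.tt x) (Fml.ff x)) ∈ Δ.1 :=
      Δ.2.1.mem_of_prv (Prv.axm (hCon ⟨x, rfl⟩))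
    exact Δ.2.1.not_both (Δ.2.1.and_mem_iff.mpr ⟨h1, h2⟩) hax
  · rw [if_neg hx] at h1; exact h1

lemma canonical_GroundC (hΓ0 : MCS Ax Γ0) (hG : GroundAx ⊆ Ax) :
    GroundC (cV1 Ax Γ0 n) (cV2 Ax Γ0 n) := by
  intro x h1 h2
  by_cases hx : 1 ≤ x ∧ x ≤ n
  · obtain ⟨Δ1, hΔ1⟩ := h1
    rw [cV1, if_pos hx] at hΔ1
    obtain ⟨Δ2, hΔ2⟩ := h2
    rw [cV2, if_pos hx] at hΔ2
    have d1 : dia (Fml.tt x) ∈ Γ0 := dia_mem_of_wld hΓ0 Δ1 hΔ1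
    have d2 : dia (Fml.ff x) ∈ Γ0 := dia_mem_of_wld hΓ0 Δ2 hΔ2
    have hax : imp (Fml.and (dia (Fml.tt x)) (dia (Fml.ff x))) (dia (Nf x)) ∈ Γ0 :=
      hΓ0.mem_of_prv (Prv.axm (hG ⟨x, rfl⟩))
    have hd : dia (Nf x) ∈ Γ0 := hΓ0.mp_closed hax (hΓ0.and_mem_iff.mpr ⟨d1, d2⟩)
    obtain ⟨Δ, hΔ, hmem, hsub⟩ := exists_mcs_dia hΓ0 hd
    have hW := box_iff_of_sub hΓ0 hΔ hsub
    refine ⟨id (α := Wld Ax Γ0) ⟨Δ, hΔ, hW⟩, ?_⟩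
    have hpair := hΔ.and_mem_iff.mp hmem
    rw [Set.mem_compl_iff, Set.mem_union, cV1, cV2, if_pos hx, if_pos hx]
    push_neg
    exact ⟨hΔ.neg_mem_iff.mp hpair.1, hΔ.neg_mem_iff.mp hpair.2⟩
  · exfalso
    obtain ⟨Δ1, hΔ1⟩ := h1
    rw [cV1, if_neg hx] at hΔ1
    exact hΔ1

lemma canonical_MinC (hΓ0 : MCS Ax Γ0) (hMin : MinAx n ⊆ Ax) :
    MinC (cV1 Ax Γ0 n) (cV2 Ax Γ0 n) := by
  classical
  intro l _ hco
  set l' : List ℕ := (l.filter (fun x => decide (1 ≤ x ∧ x ≤ n))).dedup with hl'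
  have hout : ∀ x, ¬(1 ≤ x ∧ x ≤ n) →
      ((cV1 Ax Γ0 n x ∪ cV2 Ax Γ0 n x)ᶜ : Set (Wld Ax Γ0)) = Set.univ := by
    intro x hx
    rw [cV1, cV2, if_neg hx, if_neg hx]
    simp
  have hmem_l' : ∀ x, x ∈ l' ↔ x ∈ l ∧ (1 ≤ x ∧ x ≤ n) := by
    intro x
    rw [hl', List.mem_dedup, List.mem_filter]
    simp [decide_eq_true_iff]
  by_cases hcase : l' = []
  · refine ⟨id (α := Wld Ax Γ0) ⟨Γ0, hΓ0, fun χ => Iff.rfl⟩, ?_⟩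
    rw [Set.mem_iInter₂]
    intro x hx
    have hxr : ¬(1 ≤ x ∧ x ≤ n) := by
      intro hr
      have := (hmem_l' x).mpr ⟨hx, hr⟩
      rw [hcase] at this
      simp at this
    rw [hout x hxr]
    trivial
  · have hforall : ∀ x ∈ l', dia (Nf x) ∈ Γ0 := by
      intro x hx
      obtain ⟨hxl, hxr⟩ := (hmem_l' x).mp hx
      obtain ⟨Δ, hΔm⟩ := hco x hxl
      rw [Set.mem_compl_iff, Set.mem_union, cV1, cV2, if_pos hxr, if_pos hxr] at hΔm
      push_neg at hΔm
      have h1 : Fml.neg (Fml.tt x) ∈ Δ.1 := Δ.2.1.neg_mem_iff.mpr hΔm.1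
      have h2 : Fml.neg (Fml.ff x) ∈ Δ.1 := Δ.2.1.neg_mem_iff.mpr hΔm.2
      exact dia_mem_of_wld hΓ0 Δ (Δ.2.1.and_mem_iff.mpr ⟨h1, h2⟩)
    have hnodup : l'.Nodup := List.nodup_dedup _
    have hlen : l'.length ≤ n := by
      have hsub : l'.toFinset ⊆ Finset.Icc 1 n := by
        intro x hx
        rw [List.mem_toFinset] at hx
        obtain ⟨_, h1, h2⟩ := (hmem_l' x).mp hx
        exact Finset.mem_Icc.mpr ⟨h1, h2⟩
      have := Finset.card_le_card hsub
      rw [List.toFinset_card_of_nodup hnodup, Nat.card_Icc] at this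
      omega
    obtain ⟨y, hy⟩ : ∃ y, y ∈ l' := List.exists_mem_of_ne_nil l' hcase
    set l'' : List ℕ := l' ++ List.replicate (n - l'.length) y with hl''
    have hlen'' : l''.length = n := by
      rw [hl'', List.length_append, List.length_replicate]
      omega
    have hmem'' : ∀ x ∈ l'', x ∈ l' := by
      intro x hx
      rcases List.mem_append.mp hx with h | h
      · exact h
      · rw [List.eq_of_mem_replicate h]; exact hy
    have hax : imp (bigAnd (l''.map (fun x => dia (Nf x)))) (dia (bigAnd (l''.map Nf))) ∈ Γ0 :=
      hΓ0.mem_of_prv (Prv.axm (hMin ⟨l'', hlen'', rfl⟩))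
    have hant : bigAnd (l''.map (fun x => dia (Nf x))) ∈ Γ0 := by
      apply hΓ0.bigAnd_mem
      intro χ hχ
      rw [List.mem_map] at hχ
      obtain ⟨x, hx, rfl⟩ := hχ
      exact hforall x (hmem'' x hx)
    have hd : dia (bigAnd (l''.map Nf)) ∈ Γ0 := hΓ0.mp_closed hax hant
    obtain ⟨Δ, hΔ, hmemΔ, hsubΔ⟩ := exists_mcs_dia hΓ0 hd
    have hW := box_iff_of_sub hΓ0 hΔ hsubΔ
    refine ⟨id (α := Wld Ax Γ0) ⟨Δ, hΔ, hW⟩, ?_⟩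
    rw [Set.mem_iInter₂]
    intro x hx
    by_cases hxr : 1 ≤ x ∧ x ≤ n
    · have hxl' : x ∈ l' := (hmem_l' x).mpr ⟨hx, hxr⟩
      have hxl'' : x ∈ l'' := List.mem_append.mpr (Or.inl hxl')
      have hNf : Nf x ∈ Δ :=
        hΔ.mp_prv (prv_bigAnd_mem (List.mem_map_of_mem hxl'')) hmemΔ
      have hpair := hΔ.and_mem_iff.mp hNf
      rw [Set.mem_compl_iff, Set.mem_union, cV1, cV2, if_pos hxr, if_pos hxr]
      push_neg
      exact ⟨hΔ.neg_mem_iff.mp hpair.1, hΔ.neg_mem_iff.mp hpair.2⟩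
    · rw [hout x hxr]
      trivial

end Constraints

/-- soundness and completeness of S5[Con,Ground,Min_n] for
n-formulas with respect to models satisfying the Con, Ground, and Min
constraints. -/
theorem completeness_n_variables (n : ℕ) (hn : 1 ≤ n) (φ : Fml)
    (hφ : IsNFormula n φ) :
    (∀ (W : Type) (V1 V2 : ℕ → Set W), ConC V1 V2 → GroundC V1 V2 →
        MinC V1 V2 → ∀ w : W, Sat V1 V2 w φ) ↔
      Prv (ConAx ∪ GroundAx ∪ MinAx n) φ := by
  classical
  set Ax : Set Fml := ConAx ∪ GroundAx ∪ MinAx n with hAxdef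
  have hCsub : ConAx ⊆ Ax := Set.subset_union_left.trans Set.subset_union_left
  have hGsub : GroundAx ⊆ Ax := Set.subset_union_right.trans Set.subset_union_left
  have hMsub : MinAx n ⊆ Ax := Set.subset_union_right
  constructor
  · intro hval
    by_contra hnp
    have hcons : ConsSet Ax {Fml.neg φ} := by
      rintro ⟨l, hl, hp⟩
      have h1 : Prv Ax (imp (Fml.neg φ) (bigAnd l)) := by
        apply prv_imp_bigAnd
        intro χ hχ
        have := hl χ hχ
        rw [Set.mem_singleton_iff] at this
        rw [this]
        exact pl_id _
      exact hnp (prv_of_neg_imp_bot (imp_trans h1 hp))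
    obtain ⟨Γ0, hsub0, hΓ0⟩ := lindenbaum hcons
    have hnegφ : Fml.neg φ ∈ Γ0 := hsub0 rfl
    have hw := hval (Wld Ax Γ0) (cV1 Ax Γ0 n) (cV2 Ax Γ0 n)
      (canonical_ConC hCsub) (canonical_GroundC hΓ0 hGsub) (canonical_MinC hΓ0 hMsub)
      ⟨Γ0, hΓ0, fun χ => Iff.rfl⟩
    have hφΓ := (truth_lemma hΓ0 φ hφ _).mp hw
    exact hΓ0.not_both hφΓ hnegφ
  · intro hp W V1 V2 hC hG hM w
    refine soundness_core hp ?_ w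
    rintro ψ ((h | h) | h)
    · exact conAx_valid hC ψ h
    · exact groundAx_valid hG ψ h
    · exact minAx_valid hn hM ψ h

end KripkeModal
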